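/- Let γ₁, γ₂, σ₁ > 0 and consider the transfer function G(s) = σ₁(s + γ₁)/(s(s + γ₁ + γ₂)). For every real ω ≠ 0, the real part of G(iω) is nonnegative; explicitly Re G(iω) = σ₁γ₂ /((γ₁+γ₂)² + ω²) ≥ 0. -/

import Mathlib

theorem stmt_14 (γ₁ γ₂ σ₁ : ℝ) (hγ₁ : 0 < γ₁) (hγ₂ : 0 < γ₂) (hσ₁ : 0 < σ₁)
    (ω : ℝ) (hω : ω ≠ 0) :
    let G : ℂ → ℂ := fun s => σ₁ * (s + γ₁) / (s * (s + γ₁ + γ₂))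
    (G (Complex.I * ω)).re = σ₁ * γ₂ / ((γ₁ + γ₂)^2 + ω^2) ∧
      0 ≤ (G (Complex.I * ω)).re := by
  intro G
  have hd : (0:ℝ) < (γ₁ + γ₂)^2 + ω^2 := by positivity
  have hre : (G (Complex.I * ω)).re = σ₁ * γ₂ / ((γ₁ + γ₂)^2 + ω^2) := by
    show ((σ₁ : ℂ) * (Complex.I * ω + γ₁) / (Complex.I * ω * (Complex.I * ω + γ₁ + γ₂))).re = _
    rw [Complex.div_re]
    simp [Complex.normSq_apply, Complex.mul_re, Complex.mul_im, Complex.add_re, Complex.add_im]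
    have hω2 : (0:ℝ) < ω^2 := by positivity
    rw [← add_div, div_eq_div_iff (by nlinarith [mul_self_pos.mpr hω, mul_self_nonneg (ω*(γ₁+γ₂))]) hd.ne']
    ring
  refine ⟨hre, ?_⟩
  rw [hre]; positivity
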